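/- arXiv:2601.19992 — 4 statements merged into one kernel-verified Lean document; each statement's English description precedes it below -/
import Mathlib

section
/- Let d ≥ 1 be an integer, ν > 0, μ ∈ ℝ^d, and let Σ be a symmetric positive definite d×d real matrix. Then the function z ↦ (1 + (1/ν)(z − μ)ᵀ Σ⁻¹ (z − μ))^{−(ν+d)/2} is integrable over ℝ^d with respect to Lebesgue measure. Consequently, the multivariate Student-t density with location μ, scale Σ, and ν degrees of freedom is a proper probability density on ℝ^d. -/
open Matrix MeasureTheory

theorem posdef_lower_bound (d : ℕ) (hd : 1 ≤ d) (M : Matrix (Fin d) (Fin d) ℝ) (hM : M.PosDef) :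
    ∃ c : ℝ, 0 < c ∧ ∀ x : Fin d → ℝ, c * ‖x‖ ^ 2 ≤ x ⬝ᵥ (M *ᵥ x) := by
  haveI : Nonempty (Fin d) := Fin.pos_iff_nonempty.mp hd
  have hcont : Continuous fun x : Fin d → ℝ => x ⬝ᵥ (M *ᵥ x) :=
    continuous_id.dotProduct ((continuous_const (y := M)).matrix_mulVec continuous_id)
  have hsph : (Metric.sphere (0 : Fin d → ℝ) 1).Nonempty :=
    NormedSpace.sphere_nonempty.mpr zero_le_one
  obtain ⟨u, hu, hmin⟩ := (isCompact_sphere (0 : Fin d → ℝ) 1).exists_isMinOn hsph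
    hcont.continuousOn
  have hu1 : ‖u‖ = 1 := by simpa using hu
  have hune : u ≠ 0 := by intro h; rw [h] at hu1; simp at hu1
  have hq := hM.re_dotProduct_pos (x := u) hune
  simp only [RCLike.re_to_real, star_trivial] at hq
  refine ⟨u ⬝ᵥ (M *ᵥ u), hq, fun x => ?_⟩
  rcases eq_or_ne x 0 with rfl | hx
  · simp
  · have ht : (0:ℝ) < ‖x‖ := norm_pos_iff.mpr hx
    have hmem : ‖x‖⁻¹ • x ∈ Metric.sphere (0 : Fin d → ℝ) 1 := by
      simp [norm_smul, abs_of_pos (inv_pos.mpr ht), inv_mul_cancel₀ ht.ne']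
    have := hmin hmem
    simp only [Set.mem_setOf_eq] at this
    have hscale : (‖x‖⁻¹ • x) ⬝ᵥ (M *ᵥ (‖x‖⁻¹ • x)) = ‖x‖⁻¹ * ‖x‖⁻¹ * (x ⬝ᵥ (M *ᵥ x)) := by
      rw [Matrix.mulVec_smul, smul_dotProduct, dotProduct_smul]
      ring_nf
    rw [hscale] at this
    have h2 : (u ⬝ᵥ (M *ᵥ u)) * ‖x‖^2 ≤ ‖x‖⁻¹ * ‖x‖⁻¹ * (x ⬝ᵥ (M *ᵥ x)) * ‖x‖^2 :=
      mul_le_mul_of_nonneg_right this (by positivity)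
    calc (u ⬝ᵥ (M *ᵥ u)) * ‖x‖^2 ≤ _ := h2
      _ = (x ⬝ᵥ (M *ᵥ x)) * (‖x‖⁻¹ * ‖x‖ * (‖x‖⁻¹ * ‖x‖)) := by ring
      _ = x ⬝ᵥ (M *ᵥ x) := by rw [inv_mul_cancel₀ ht.ne']; ring


/-- **The multivariate Student-t kernel is integrable and normalizable.**
For `d ≥ 1`, `ν > 0`, `μ ∈ ℝ^d` and a symmetric positive definite `d × d` matrix `Σ`,
the kernel `z ↦ (1 + (1/ν)(z - μ)ᵀ Σ⁻¹ (z - μ))^(-(ν+d)/2)` is integrable over `ℝ^d`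
with respect to Lebesgue measure; consequently there is a normalizing constant `c > 0`
making it a proper probability density. -/
theorem studentT_kernel_integrable_and_proper_density
    (d : ℕ) (hd : 1 ≤ d) (ν : ℝ) (hν : 0 < ν)
    (μ : Fin d → ℝ)
    (Sig : Matrix (Fin d) (Fin d) ℝ) (hSigSym : Sig.IsSymm) (hSig : Sig.PosDef) :
    Integrable
        (fun z : Fin d → ℝ =>
          (1 + (1 / ν) * ((z - μ) ⬝ᵥ (Sig⁻¹ *ᵥ (z - μ)))) ^ (-(ν + (d : ℝ)) / 2)) ∧
      ∃ c : ℝ, 0 < c ∧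
        ∫ z : Fin d → ℝ,
            c * (1 + (1 / ν) * ((z - μ) ⬝ᵥ (Sig⁻¹ *ᵥ (z - μ)))) ^ (-(ν + (d : ℝ)) / 2) = 1 := by
  set M := Sig⁻¹ with hMdef
  have hM : M.PosDef := hSig.inv
  obtain ⟨c0, hc0, hbound⟩ := posdef_lower_bound d hd M hM
  set p : ℝ := -(ν + (d : ℝ)) / 2 with hp
  have hpneg : p ≤ 0 := by
    rw [hp]
    have h0 : (0:ℝ) ≤ ν + d := by positivity
    linarith
  set f : (Fin d → ℝ) → ℝ := fun z =>
    (1 + (1 / ν) * ((z - μ) ⬝ᵥ (M *ᵥ (z - μ)))) ^ p with hf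
  have hq_nonneg : ∀ x : Fin d → ℝ, 0 ≤ x ⬝ᵥ (M *ᵥ x) := fun x =>
    le_trans (by positivity) (hbound x)
  have hbase : ∀ z : Fin d → ℝ, (1:ℝ) ≤ 1 + (1 / ν) * ((z - μ) ⬝ᵥ (M *ᵥ (z - μ))) := by
    intro z
    have := hq_nonneg (z - μ)
    nlinarith [one_div_pos.mpr hν]
  have hbase_pos : ∀ z : Fin d → ℝ, (0:ℝ) < 1 + (1 / ν) * ((z - μ) ⬝ᵥ (M *ᵥ (z - μ))) :=
    fun z => lt_of_lt_of_le one_pos (hbase z)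
  have hfpos : ∀ z, 0 < f z := fun z => Real.rpow_pos_of_pos (hbase_pos z) p
  -- continuity
  have hqcont : Continuous fun z : Fin d → ℝ =>
      1 + (1 / ν) * ((z - μ) ⬝ᵥ (M *ᵥ (z - μ))) := by
    have h1 : Continuous fun z : Fin d → ℝ => z - μ := continuous_id.sub continuous_const
    exact continuous_const.add (continuous_const.mul
      (h1.dotProduct ((continuous_const (y := M)).matrix_mulVec h1)))
  have hfcont : Continuous f :=
    hqcont.rpow_const fun z => Or.inl (hbase_pos z).ne'
  -- the comparison constant
  set c1 : ℝ := min (c0 / ν) 1 with hc1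
  have hc1pos : 0 < c1 := lt_min (div_pos hc0 hν) one_pos
  have hkey : ∀ z : Fin d → ℝ,
      c1 / 2 * (1 + ‖z - μ‖) ^ 2 ≤ 1 + (1 / ν) * ((z - μ) ⬝ᵥ (M *ᵥ (z - μ))) := by
    intro z
    have h1 : c0 / ν * ‖z - μ‖ ^ 2 ≤ (1 / ν) * ((z - μ) ⬝ᵥ (M *ᵥ (z - μ))) := by
      have := hbound (z - μ)
      rw [div_mul_eq_mul_div, one_div, inv_mul_eq_div, div_le_div_iff_of_pos_right hν]
      exact this
    have h2 : c1 ≤ c0 / ν := min_le_left _ _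
    have h3 : c1 ≤ 1 := min_le_right _ _
    have h4 : (0:ℝ) ≤ ‖z - μ‖ := norm_nonneg _
    nlinarith [sq_nonneg (1 - ‖z - μ‖), sq_nonneg (‖z - μ‖)]
  -- bound f by an integrable function
  have hDlt : (Module.finrank ℝ (Fin d → ℝ) : ℝ) < ν + d := by
    rw [Module.finrank_fintype_fun_eq_card, Fintype.card_fin]; linarith
  have hInt0 : Integrable fun x : Fin d → ℝ => (1 + ‖x‖) ^ (-(ν + (d:ℝ))) :=
    integrable_one_add_norm hDlt
  have hInt1 : Integrable fun z : Fin d → ℝ => (1 + ‖z - μ‖) ^ (-(ν + (d:ℝ))) :=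
    hInt0.comp_sub_right μ
  have hInt2 : Integrable fun z : Fin d → ℝ =>
      (c1 / 2) ^ p * (1 + ‖z - μ‖) ^ (-(ν + (d:ℝ))) := hInt1.const_mul _
  have hfint : Integrable f := by
    refine hInt2.mono' hfcont.aestronglyMeasurable (Filter.Eventually.of_forall fun z => ?_)
    rw [Real.norm_of_nonneg (hfpos z).le, hf]
    have hb2 : (0:ℝ) < c1 / 2 * (1 + ‖z - μ‖) ^ 2 := by positivity
    calc (1 + (1 / ν) * ((z - μ) ⬝ᵥ (M *ᵥ (z - μ)))) ^ p
        ≤ (c1 / 2 * (1 + ‖z - μ‖) ^ 2) ^ p :=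
          Real.rpow_le_rpow_of_nonpos hb2 (hkey z) hpneg
      _ = (c1 / 2) ^ p * ((1 + ‖z - μ‖) ^ 2) ^ p := by
          rw [Real.mul_rpow (by positivity) (by positivity)]
      _ = (c1 / 2) ^ p * (1 + ‖z - μ‖) ^ (-(ν + (d:ℝ))) := by
          rw [← Real.rpow_natCast (1 + ‖z - μ‖) 2, ← Real.rpow_mul (by positivity)]
          congr 1
          rw [hp]; push_cast; ring
  refine ⟨hfint, ?_⟩
  have hIpos : 0 < ∫ z, f z := by
    rw [integral_pos_iff_support_of_nonneg_ae
      (Filter.Eventually.of_forall fun z => (hfpos z).le) hfint]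
    have : Function.support f = Set.univ := Set.eq_univ_of_forall fun z => (hfpos z).ne'
    rw [this]
    exact MeasureTheory.Measure.measure_univ_pos.mpr (NeZero.ne volume)
  refine ⟨(∫ z, f z)⁻¹, inv_pos.mpr hIpos, ?_⟩
  rw [MeasureTheory.integral_const_mul, inv_mul_cancel₀ hIpos.ne']
end

section
/- Let d ≥ 1 be an integer, ν > 0, μ ∈ ℝ^d, and let Σ be a symmetric positive definite d×d real matrix. Define δ(z) = (z − μ)ᵀ Σ⁻¹ (z − μ) and ℓ(z) = ((ν + d)/2) · log(1 + δ(z)/ν). Let R_z ≥ 0. Then for all z with ‖z − μ‖ ≤ R_z, the Hessian of ℓ satisfies the operator-norm bound ‖∇²ℓ(z)‖ ≤ ((ν + d)/ν) ‖Σ⁻¹‖ + (2(ν + d)/ν²) ‖Σ⁻¹‖² R_z². -/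
open Matrix RealInnerProductSpace

set_option maxHeartbeats 1000000 in
/-- **Operator-norm bound on the Hessian of the Student-t negative log-likelihood.**
With `δ(z) = (z - μ)ᵀ Σ⁻¹ (z - μ)` and `ℓ(z) = ((ν + d)/2) log(1 + δ(z)/ν)`, for every
`R_z ≥ 0` and every `z` with `‖z − μ‖ ≤ R_z`,
`‖∇²ℓ(z)‖ ≤ ((ν + d)/ν) ‖Σ⁻¹‖ + (2(ν + d)/ν²) ‖Σ⁻¹‖² R_z²`,
where the Hessian is the derivative of the gradient and `‖·‖` denotes the operator
norm with respect to the Euclidean norm. -/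
theorem studentT_nll_hessian_norm_bound
    (d : ℕ) (hd : 1 ≤ d) (ν : ℝ) (hν : 0 < ν)
    (μ : EuclideanSpace ℝ (Fin d))
    (Sig : Matrix (Fin d) (Fin d) ℝ) (hSigSym : Sig.IsSymm) (hSig : Sig.PosDef)
    (δ : EuclideanSpace ℝ (Fin d) → ℝ)
    (hδ : δ = fun (z : EuclideanSpace ℝ (Fin d)) => (z - μ) ⬝ᵥ (Sig⁻¹ *ᵥ (z - μ)))
    (ℓ : EuclideanSpace ℝ (Fin d) → ℝ)
    (hℓ : ℓ = fun (z : EuclideanSpace ℝ (Fin d)) =>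
      ((ν + (d : ℝ)) / 2) * Real.log (1 + δ z / ν))
    (Rz : ℝ) (hRz : 0 ≤ Rz) :
    ∀ z : EuclideanSpace ℝ (Fin d), ‖z - μ‖ ≤ Rz →
      ‖fderiv ℝ (gradient ℓ) z‖ ≤
        ((ν + (d : ℝ)) / ν) * ‖toEuclideanCLM (𝕜 := ℝ) Sig⁻¹‖ +
          (2 * (ν + (d : ℝ)) / ν ^ 2) * ‖toEuclideanCLM (𝕜 := ℝ) Sig⁻¹‖ ^ 2 * Rz ^ 2 := by
  intro z hz
  set T : EuclideanSpace ℝ (Fin d) →L[ℝ] EuclideanSpace ℝ (Fin d) :=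
    toEuclideanCLM (𝕜 := ℝ) Sig⁻¹ with hT
  set c : ℝ := (ν + (d : ℝ)) / 2 with hc
  have hcpos : 0 < c := by positivity
  have hPD : Sig⁻¹.PosDef := hSig.inv
  -- dot product as inner product
  have hdot : ∀ x y : EuclideanSpace ℝ (Fin d),
      x ⬝ᵥ (Sig⁻¹ *ᵥ (y : Fin d → ℝ)) = ⟪x, T y⟫ := by
    intro x y
    have h : (T y : Fin d → ℝ) = Sig⁻¹ *ᵥ (y : Fin d → ℝ) :=
      ofLp_toEuclideanCLM Sig⁻¹ y
    simp [PiLp.inner_apply, dotProduct, RCLike.inner_apply, h, mul_comm]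
  -- self-adjointness of T
  have hsym : ∀ x y : EuclideanSpace ℝ (Fin d), ⟪T x, y⟫ = ⟪x, T y⟫ := by
    intro x y
    have := (Matrix.isHermitian_iff_isSymmetric.mp hPD.1) x y
    exact this
  -- δ expressed with inner product
  have hδfun : δ = fun w : EuclideanSpace ℝ (Fin d) => ⟪w - μ, T (w - μ)⟫ := by
    rw [hδ]; funext w; exact hdot _ _
  -- nonnegativity of δ
  have hδ0 : ∀ w : EuclideanSpace ℝ (Fin d), 0 ≤ δ w := by
    intro w
    rw [hδ]
    simpa using hPD.posSemidef.re_dotProduct_nonneg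
      ((w - μ : EuclideanSpace ℝ (Fin d)) : Fin d → ℝ)
  have hspos : ∀ w : EuclideanSpace ℝ (Fin d), 0 < ν + δ w := fun w => by
    have := hδ0 w; linarith
  -- derivative of δ
  have hδder : ∀ w : EuclideanSpace ℝ (Fin d), HasFDerivAt δ
      ((fderivInnerCLM ℝ (w - μ, T (w - μ))).comp
        ((ContinuousLinearMap.id ℝ (EuclideanSpace ℝ (Fin d))).prod T)) w := by
    intro w
    have hv : HasFDerivAt (fun z : EuclideanSpace ℝ (Fin d) => z - μ)
        (ContinuousLinearMap.id ℝ (EuclideanSpace ℝ (Fin d))) w :=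
      (hasFDerivAt_id w).sub_const μ
    have hTv : HasFDerivAt (fun z : EuclideanSpace ℝ (Fin d) => T (z - μ)) T w := by
      have h2 := T.hasFDerivAt.comp w hv
      rw [ContinuousLinearMap.comp_id] at h2
      exact h2
    have := hv.inner ℝ hTv
    rw [hδfun]
    exact this
  -- key: gradient of ℓ
  have key : ∀ w : EuclideanSpace ℝ (Fin d),
      HasGradientAt ℓ ((2 * c * (ν + δ w)⁻¹) • T (w - μ)) w := by
    intro w
    rw [hasGradientAt_iff_hasFDerivAt]
    have hu : (0:ℝ) < 1 + δ w / ν := by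
      have h0 := hδ0 w
      have : 0 ≤ δ w / ν := by positivity
      linarith
    have hlog : HasDerivAt Real.log (1 + δ w / ν)⁻¹ (1 + δ w / ν) :=
      Real.hasDerivAt_log (ne_of_gt hu)
    have hin : HasFDerivAt (fun z : EuclideanSpace ℝ (Fin d) => 1 + δ z / ν)
        (ν⁻¹ • ((fderivInnerCLM ℝ (w - μ, T (w - μ))).comp
          ((ContinuousLinearMap.id ℝ (EuclideanSpace ℝ (Fin d))).prod T))) w := by
      have h1 : HasFDerivAt (fun z : EuclideanSpace ℝ (Fin d) => ν⁻¹ * δ z)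
          (ν⁻¹ • ((fderivInnerCLM ℝ (w - μ, T (w - μ))).comp
            ((ContinuousLinearMap.id ℝ (EuclideanSpace ℝ (Fin d))).prod T))) w :=
        (hδder w).const_mul ν⁻¹
      have h2 := h1.const_add 1
      refine h2.congr_of_eventuallyEq ?_
      filter_upwards with x
      rw [div_eq_inv_mul]
    have hcomp := (hlog.comp_hasFDerivAt w hin).const_mul c
    have hfin : HasFDerivAt ℓ
        (c • ((1 + δ w / ν)⁻¹ • (ν⁻¹ • ((fderivInnerCLM ℝ (w - μ, T (w - μ))).comp
          ((ContinuousLinearMap.id ℝ (EuclideanSpace ℝ (Fin d))).prod T))))) w := by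
      rw [hℓ]
      exact hcomp
    refine hfin.congr_fderiv ?_
    ext h
    simp only [ContinuousLinearMap.smul_apply, ContinuousLinearMap.comp_apply,
      ContinuousLinearMap.prod_apply, ContinuousLinearMap.coe_id', id_eq,
      fderivInnerCLM_apply, smul_eq_mul, InnerProductSpace.toDual_apply_apply,
      real_inner_smul_left]
    have h1 : ⟪w - μ, T h⟫ = ⟪T (w - μ), h⟫ := (hsym (w - μ) h).symm
    have h2 : ⟪h, T (w - μ)⟫ = ⟪T (w - μ), h⟫ := real_inner_comm _ _
    rw [h1, h2]
    have hs := hspos w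
    have hu' : (1 : ℝ) + δ w / ν ≠ 0 := ne_of_gt hu
    field_simp
    ring

  -- the gradient as a function
  have hgrad : gradient ℓ = fun w : EuclideanSpace ℝ (Fin d) =>
      (2 * c * (ν + δ w)⁻¹) • T (w - μ) :=
    funext fun w => (key w).gradient
  -- derivative of the gradient at z
  have hvz : HasFDerivAt (fun w : EuclideanSpace ℝ (Fin d) => w - μ)
      (ContinuousLinearMap.id ℝ (EuclideanSpace ℝ (Fin d))) z :=
    (hasFDerivAt_id z).sub_const μ
  have hTvz : HasFDerivAt (fun w : EuclideanSpace ℝ (Fin d) => T (w - μ)) T z := by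
    have h2 := T.hasFDerivAt.comp z hvz
    rw [ContinuousLinearMap.comp_id] at h2
    exact h2
  set Dδ : EuclideanSpace ℝ (Fin d) →L[ℝ] ℝ :=
    (fderivInnerCLM ℝ (z - μ, T (z - μ))).comp
      ((ContinuousLinearMap.id ℝ (EuclideanSpace ℝ (Fin d))).prod T) with hDδdef
  have hs0 : 0 < ν + δ z := hspos z
  have hsle : ν ≤ ν + δ z := by have := hδ0 z; linarith
  have hinv : HasFDerivAt (fun w : EuclideanSpace ℝ (Fin d) => (ν + δ w)⁻¹)
      ((-((ν + δ z) ^ 2)⁻¹) • Dδ) z := by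
    have hadd : HasFDerivAt (fun w : EuclideanSpace ℝ (Fin d) => ν + δ w) Dδ z :=
      (hδder z).const_add ν
    exact (hasDerivAt_inv (ne_of_gt hs0)).comp_hasFDerivAt z hadd
  have hφ : HasFDerivAt (fun w : EuclideanSpace ℝ (Fin d) => 2 * c * (ν + δ w)⁻¹)
      ((2 * c) • ((-((ν + δ z) ^ 2)⁻¹) • Dδ)) z := hinv.const_mul (2 * c)
  have hg : HasFDerivAt (fun w : EuclideanSpace ℝ (Fin d) =>
        (2 * c * (ν + δ w)⁻¹) • T (w - μ))
      ((2 * c * (ν + δ z)⁻¹) • T +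
        ((2 * c) • ((-((ν + δ z) ^ 2)⁻¹) • Dδ)).smulRight (T (z - μ))) z :=
    hφ.smul hTvz
  have hfd : fderiv ℝ (gradient ℓ) z =
      (2 * c * (ν + δ z)⁻¹) • T +
        ((2 * c) • ((-((ν + δ z) ^ 2)⁻¹) • Dδ)).smulRight (T (z - μ)) := by
    rw [hgrad]
    exact hg.fderiv
  -- norm bounds
  have hnT : (0:ℝ) ≤ ‖T‖ := norm_nonneg _
  have hvle : ‖z - μ‖ ≤ Rz := hz
  have hvnn : (0:ℝ) ≤ ‖z - μ‖ := norm_nonneg _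
  have hDδle : ‖Dδ‖ ≤ 2 * ‖T‖ * ‖z - μ‖ := by
    refine ContinuousLinearMap.opNorm_le_bound _ (by positivity) fun h => ?_
    have happ : Dδ h = ⟪z - μ, T h⟫ + ⟪h, T (z - μ)⟫ := by
      simp [hDδdef, fderivInnerCLM_apply]
    rw [happ, Real.norm_eq_abs]
    calc |⟪z - μ, T h⟫ + ⟪h, T (z - μ)⟫|
        ≤ |⟪z - μ, T h⟫| + |⟪h, T (z - μ)⟫| := abs_add_le _ _
      _ ≤ ‖z - μ‖ * ‖T h‖ + ‖h‖ * ‖T (z - μ)‖ :=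
          add_le_add (abs_real_inner_le_norm _ _) (abs_real_inner_le_norm _ _)
      _ ≤ ‖z - μ‖ * (‖T‖ * ‖h‖) + ‖h‖ * (‖T‖ * ‖z - μ‖) :=
          add_le_add (mul_le_mul_of_nonneg_left (T.le_opNorm h) hvnn)
            (mul_le_mul_of_nonneg_left (T.le_opNorm (z - μ)) (norm_nonneg h))
      _ = 2 * ‖T‖ * ‖z - μ‖ * ‖h‖ := by ring
  have hb1 : ‖(2 * c * (ν + δ z)⁻¹) • T‖ ≤ (ν + (d:ℝ)) / ν * ‖T‖ := by
    refine le_trans (ContinuousLinearMap.opNorm_smul_le _ _) ?_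
    rw [Real.norm_eq_abs, abs_of_pos (by positivity : (0:ℝ) < 2 * c * (ν + δ z)⁻¹)]
    have hinv2 : (ν + δ z)⁻¹ ≤ ν⁻¹ := inv_anti₀ hν hsle
    have h1 : 2 * c * (ν + δ z)⁻¹ ≤ 2 * c * ν⁻¹ :=
      mul_le_mul_of_nonneg_left hinv2 (by positivity)
    calc 2 * c * (ν + δ z)⁻¹ * ‖T‖ ≤ 2 * c * ν⁻¹ * ‖T‖ :=
          mul_le_mul_of_nonneg_right h1 hnT
      _ = (ν + (d:ℝ)) / ν * ‖T‖ := by rw [hc]; ring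
  have hb2 : ‖((2 * c) • ((-((ν + δ z) ^ 2)⁻¹) • Dδ)).smulRight (T (z - μ))‖ ≤
      2 * (ν + (d:ℝ)) / ν ^ 2 * ‖T‖ ^ 2 * Rz ^ 2 := by
    rw [ContinuousLinearMap.norm_smulRight_apply]
    have hA : ‖(-((ν + δ z) ^ 2)⁻¹) • Dδ‖ ≤ ((ν + δ z) ^ 2)⁻¹ * ‖Dδ‖ := by
      refine le_trans (ContinuousLinearMap.opNorm_smul_le _ _) ?_
      rw [Real.norm_eq_abs, abs_neg, abs_of_pos (by positivity)]
    have hB : ‖(2 * c) • ((-((ν + δ z) ^ 2)⁻¹) • Dδ)‖ ≤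
        2 * c * (((ν + δ z) ^ 2)⁻¹ * ‖Dδ‖) := by
      refine le_trans (ContinuousLinearMap.opNorm_smul_le _ _) ?_
      rw [Real.norm_eq_abs, abs_of_pos (by positivity : (0:ℝ) < 2 * c)]
      exact mul_le_mul_of_nonneg_left hA (by positivity)
    have hTv : ‖T (z - μ)‖ ≤ ‖T‖ * Rz :=
      le_trans (T.le_opNorm _) (mul_le_mul_of_nonneg_left hvle hnT)
    have hinv2 : ((ν + δ z) ^ 2)⁻¹ ≤ (ν ^ 2)⁻¹ :=
      inv_anti₀ (by positivity) (pow_le_pow_left₀ hν.le hsle 2)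
    have hDδ2 : ‖Dδ‖ ≤ 2 * ‖T‖ * Rz :=
      le_trans hDδle (mul_le_mul_of_nonneg_left hvle (mul_nonneg two_pos.le hnT))
    calc ‖(2 * c) • ((-((ν + δ z) ^ 2)⁻¹) • Dδ)‖ * ‖T (z - μ)‖
        ≤ 2 * c * (((ν + δ z) ^ 2)⁻¹ * ‖Dδ‖) * (‖T‖ * Rz) :=
          mul_le_mul hB hTv (norm_nonneg _)
            (mul_nonneg (by positivity) (mul_nonneg (by positivity) (norm_nonneg _)))
      _ ≤ 2 * c * ((ν ^ 2)⁻¹ * (2 * ‖T‖ * Rz)) * (‖T‖ * Rz) := by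
          have h1 : ((ν + δ z) ^ 2)⁻¹ * ‖Dδ‖ ≤ (ν ^ 2)⁻¹ * (2 * ‖T‖ * Rz) :=
            mul_le_mul hinv2 hDδ2 (norm_nonneg _) (by positivity)
          have h2 := mul_le_mul_of_nonneg_left h1 (show (0:ℝ) ≤ 2 * c by positivity)
          exact mul_le_mul_of_nonneg_right h2 (mul_nonneg hnT hRz)
      _ = 2 * (ν + (d:ℝ)) / ν ^ 2 * ‖T‖ ^ 2 * Rz ^ 2 := by rw [hc]; ring
  rw [hfd]
  calc ‖(2 * c * (ν + δ z)⁻¹) • T +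
        ((2 * c) • ((-((ν + δ z) ^ 2)⁻¹) • Dδ)).smulRight (T (z - μ))‖
      ≤ ‖(2 * c * (ν + δ z)⁻¹) • T‖ +
        ‖((2 * c) • ((-((ν + δ z) ^ 2)⁻¹) • Dδ)).smulRight (T (z - μ))‖ := norm_add_le _ _
    _ ≤ (ν + (d:ℝ)) / ν * ‖T‖ + 2 * (ν + (d:ℝ)) / ν ^ 2 * ‖T‖ ^ 2 * Rz ^ 2 :=
        add_le_add hb1 hb2
end

section
/- Let d ≥ 1 be an integer, ν > 0, μ ∈ ℝ^d, ε > 0, and let Σ be a symmetric d×d real matrix with Σ ⪰ ε I_d. Define δ(z) = (z − μ)ᵀ Σ⁻¹ (z − μ) and ℓ(z) = ((ν + d)/2) · log(1 + δ(z)/ν). Let R_z ≥ 0. Then for all z with ‖z − μ‖ ≤ R_z, the Hessian of ℓ satisfies ‖∇²ℓ(z)‖ ≤ ((ν + d)/ν) · (1/ε) + (2(ν + d)/ν²) · (R_z²/ε²). -/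
open Matrix

set_option maxHeartbeats 1000000 in
/-- **Hessian norm bound under an eigenvalue lower bound `Σ ⪰ ε I`.**
If `Σ` is symmetric with `Σ − ε I_d` positive semidefinite for some `ε > 0`, then with
`δ(z) = (z - μ)ᵀ Σ⁻¹ (z - μ)` and `ℓ(z) = ((ν + d)/2) log(1 + δ(z)/ν)`, for every
`R_z ≥ 0` and every `z` with `‖z − μ‖ ≤ R_z`,
`‖∇²ℓ(z)‖ ≤ ((ν + d)/ν)(1/ε) + (2(ν + d)/ν²)(R_z²/ε²)`. -/
theorem studentT_nll_hessian_norm_bound_of_eps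
    (d : ℕ) (hd : 1 ≤ d) (ν : ℝ) (hν : 0 < ν)
    (μ : EuclideanSpace ℝ (Fin d)) (ε : ℝ) (hε : 0 < ε)
    (Sig : Matrix (Fin d) (Fin d) ℝ) (hSigSym : Sig.IsSymm)
    (hSig : (Sig - ε • (1 : Matrix (Fin d) (Fin d) ℝ)).PosSemidef)
    (δ : EuclideanSpace ℝ (Fin d) → ℝ)
    (hδ : δ = fun (z : EuclideanSpace ℝ (Fin d)) => (z - μ) ⬝ᵥ (Sig⁻¹ *ᵥ (z - μ)))
    (ℓ : EuclideanSpace ℝ (Fin d) → ℝ)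
    (hℓ : ℓ = fun (z : EuclideanSpace ℝ (Fin d)) =>
      ((ν + (d : ℝ)) / 2) * Real.log (1 + δ z / ν))
    (Rz : ℝ) (hRz : 0 ≤ Rz) :
    ∀ z : EuclideanSpace ℝ (Fin d), ‖z - μ‖ ≤ Rz →
      ‖fderiv ℝ (gradient ℓ) z‖ ≤
        ((ν + (d : ℝ)) / ν) * (1 / ε) +
          (2 * (ν + (d : ℝ)) / ν ^ 2) * (Rz ^ 2 / ε ^ 2) := by
  -- notation
  set c : ℝ := ν + (d : ℝ) with hc
  have hcpos : 0 < c := by positivity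
  -- positive definiteness of Sig
  have hOne : ((ε • (1 : Matrix (Fin d) (Fin d) ℝ))).PosDef := by
    exact Matrix.PosDef.one.smul hε
  have hSigPD : Sig.PosDef := by
    have h1 : Sig = (Sig - ε • (1 : Matrix (Fin d) (Fin d) ℝ)) + ε • 1 := by abel
    rw [h1]; exact Matrix.PosDef.posSemidef_add hSig hOne
  have hAPD : (Sig⁻¹).PosDef := hSigPD.inv
  -- continuous linear maps
  set T : EuclideanSpace ℝ (Fin d) →L[ℝ] EuclideanSpace ℝ (Fin d) :=
    Matrix.toEuclideanCLM (𝕜 := ℝ) Sig⁻¹ with hT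
  set S : EuclideanSpace ℝ (Fin d) →L[ℝ] EuclideanSpace ℝ (Fin d) :=
    Matrix.toEuclideanCLM (𝕜 := ℝ) Sig with hS
  have hST : ∀ x : EuclideanSpace ℝ (Fin d), S (T x) = x := by
    intro x
    have h1 : Sig * Sig⁻¹ = 1 :=
      Matrix.mul_nonsing_inv _ ((Matrix.isUnit_iff_isUnit_det _).1 hSigPD.isUnit)
    have h2 : S * T = 1 := by
      rw [hS, hT, ← _root_.map_mul (Matrix.toEuclideanCLM (𝕜 := ℝ)), h1, _root_.map_one]
    calc S (T x) = (S * T) x := rfl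
      _ = x := by rw [h2]; rfl
  -- inner ℝ product identities
  have hinner : ∀ x y : EuclideanSpace ℝ (Fin d),
      (inner ℝ x y : ℝ) = (WithLp.equiv 2 _ x) ⬝ᵥ (WithLp.equiv 2 _ y) := fun x y => by
    rw [EuclideanSpace.inner_eq_star_dotProduct, star_trivial, dotProduct_comm]; rfl
  have hTvec : ∀ (M : Matrix (Fin d) (Fin d) ℝ) (x : EuclideanSpace ℝ (Fin d)),
      WithLp.equiv 2 _ ((Matrix.toEuclideanCLM (𝕜 := ℝ) M) x) = M *ᵥ (WithLp.equiv 2 _ x) :=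
    fun M x => Matrix.ofLp_toEuclideanCLM M x
  -- quadratic lower bound for S
  have hquad : ∀ y : EuclideanSpace ℝ (Fin d), ε * ‖y‖ ^ 2 ≤ (inner ℝ y (S y) : ℝ) := by
    intro y
    have h0 := hSig.dotProduct_mulVec_nonneg (WithLp.equiv 2 _ y)
    have hyy : (WithLp.equiv 2 _ y) ⬝ᵥ (WithLp.equiv 2 _ y) = ‖y‖ ^ 2 := by
      rw [← hinner y y, real_inner_self_eq_norm_sq]
    rw [star_trivial, Matrix.sub_mulVec, dotProduct_sub, sub_nonneg,
      Matrix.smul_mulVec, Matrix.one_mulVec, dotProduct_smul, hyy] at h0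
    rw [hinner, hS, hTvec]
    simpa using h0
  -- norm bound for T
  have hTnorm : ∀ x : EuclideanSpace ℝ (Fin d), ‖T x‖ ≤ (1 / ε) * ‖x‖ := by
    intro x
    have h1 : ε * ‖T x‖ ^ 2 ≤ (inner ℝ (T x) (S (T x)) : ℝ) := hquad (T x)
    rw [hST x] at h1
    have h2 : (inner ℝ (T x) x : ℝ) ≤ ‖T x‖ * ‖x‖ := real_inner_le_norm _ _
    rcases eq_or_lt_of_le (norm_nonneg (T x)) with h3 | h3
    · rw [← h3]; positivity
    · have h4 : ε * ‖T x‖ ≤ ‖x‖ := by nlinarith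
      rw [div_mul_eq_mul_div, le_div_iff₀ hε, one_mul, mul_comm]
      exact h4
  -- symmetry of T w.r.t. inner ℝ product
  have hAsymm : (Sig⁻¹)ᵀ = Sig⁻¹ := hAPD.isHermitian
  have hTsymm : ∀ x y : EuclideanSpace ℝ (Fin d),
      (inner ℝ (T x) y : ℝ) = (inner ℝ x (T y) : ℝ) := by
    intro x y
    rw [hinner, hinner, hT, hTvec, hTvec]
    rw [Matrix.dotProduct_mulVec, ← Matrix.vecMul_transpose, hAsymm, dotProduct_comm]
  -- δ as inner ℝ product
  have hδ2 : δ = fun z : EuclideanSpace ℝ (Fin d) => (inner ℝ (z - μ) (T (z - μ)) : ℝ) := by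
    funext z
    rw [hδ, hinner, hT, hTvec]
    rfl
  have hδnn : ∀ z : EuclideanSpace ℝ (Fin d), 0 ≤ δ z := by
    intro z
    rw [hδ]
    have h0 := hAPD.posSemidef.dotProduct_mulVec_nonneg (WithLp.equiv 2 _ (z - μ))
    rw [star_trivial] at h0
    exact h0
  have hνδ : ∀ z : EuclideanSpace ℝ (Fin d), 0 < ν + δ z := fun z =>
    add_pos_of_pos_of_nonneg hν (hδnn z)
  -- derivative of δ
  have hδderiv : ∀ z : EuclideanSpace ℝ (Fin d),
      HasFDerivAt δ ((2 : ℝ) • (innerSL ℝ (T (z - μ)))) z := by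
    intro z
    have hw : HasFDerivAt (fun z : EuclideanSpace ℝ (Fin d) => z - μ)
        (ContinuousLinearMap.id ℝ _) z := (hasFDerivAt_id z).sub_const μ
    have hTw : HasFDerivAt (fun z : EuclideanSpace ℝ (Fin d) => T (z - μ))
        (T.comp (ContinuousLinearMap.id ℝ _)) z := T.hasFDerivAt.comp z hw
    have h := hw.inner ℝ hTw
    rw [hδ2]
    refine h.congr_fderiv ?_
    ext h'
    simp only [fderivInnerCLM_apply, ContinuousLinearMap.comp_apply,
      ContinuousLinearMap.prod_apply, ContinuousLinearMap.id_apply,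
      ContinuousLinearMap.smul_apply, innerSL_apply_apply]
    rw [two_smul]
    have hkey : (inner ℝ h' (T (z - μ)) : ℝ) = inner ℝ (z - μ) (T h') := by
      rw [← hTsymm (z - μ) h', real_inner_comm]
    have hkey2 : (inner ℝ (T (z - μ)) h' : ℝ) = inner ℝ (z - μ) (T h') := hTsymm (z - μ) h'
    linarith [hkey, hkey2]
  -- gradient of ℓ
  set G : EuclideanSpace ℝ (Fin d) → EuclideanSpace ℝ (Fin d) :=
    fun z => (c / (ν + δ z)) • T (z - μ) with hG
  have hℓgrad : ∀ z : EuclideanSpace ℝ (Fin d), HasGradientAt ℓ (G z) z := by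
    intro z
    have hfun : (fun z : EuclideanSpace ℝ (Fin d) => 1 + δ z / ν)
        = fun z => 1 + ν⁻¹ * δ z := by
      funext y; rw [div_eq_inv_mul]
    have hu : HasFDerivAt (fun z : EuclideanSpace ℝ (Fin d) => 1 + δ z / ν)
        (ν⁻¹ • ((2 : ℝ) • (innerSL ℝ (T (z - μ))))) z := by
      rw [hfun]; exact ((hδderiv z).const_mul ν⁻¹).const_add 1
    have hupos : 0 < 1 + δ z / ν := by
      have h0 : 0 ≤ δ z / ν := div_nonneg (hδnn z) hν.le
      linarith
    have hlog := (Real.hasDerivAt_log hupos.ne').comp_hasFDerivAt z hu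
    have hfd := hlog.const_mul (c / 2)
    rw [hasGradientAt_iff_hasFDerivAt]
    have hinv : (1 + δ z / ν)⁻¹ = ν / (ν + δ z) := by
      have h1 : 1 + δ z / ν = (ν + δ z) / ν := by field_simp
      rw [h1, inv_div]
    have heq : (InnerProductSpace.toDual ℝ _ (G z) : EuclideanSpace ℝ (Fin d) →L[ℝ] ℝ) =
        (c / 2) • ((1 + δ z / ν)⁻¹ • (ν⁻¹ • ((2 : ℝ) • (innerSL ℝ (T (z - μ)))))) := by
      ext h'
      simp only [InnerProductSpace.toDual_apply_apply, ContinuousLinearMap.smul_apply,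
        innerSL_apply_apply, smul_eq_mul, hG, real_inner_smul_left, hinv]
      set X : ℝ := (inner ℝ (T (z - μ)) h' : ℝ) with hXdef
      have h1 : ν + δ z ≠ 0 := (hνδ z).ne'
      field_simp
    rw [hℓ, heq]
    exact hfd
  have hgradeq : gradient ℓ = G := gradient_eq hℓgrad
  -- main part
  intro z hz
  have hs : 0 < ν + δ z := hνδ z
  have hw : HasFDerivAt (fun z : EuclideanSpace ℝ (Fin d) => z - μ)
      (ContinuousLinearMap.id ℝ _) z := (hasFDerivAt_id z).sub_const μ
  have hTw : HasFDerivAt (fun z : EuclideanSpace ℝ (Fin d) => T (z - μ))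
      (T.comp (ContinuousLinearMap.id ℝ _)) z := T.hasFDerivAt.comp z hw
  have hνd : HasFDerivAt (fun z : EuclideanSpace ℝ (Fin d) => ν + δ z)
      ((2 : ℝ) • (innerSL ℝ (T (z - μ)))) z := (hδderiv z).const_add ν
  have hinv' := (hasDerivAt_inv hs.ne').comp_hasFDerivAt z hνd
  have hφ := hinv'.const_mul c
  have hGd := hφ.smul hTw
  have hGfun : G = fun y : EuclideanSpace ℝ (Fin d) =>
      (c * (ν + δ y)⁻¹) • T (y - μ) := by
    funext y
    rw [hG]
    show (c / (ν + δ y)) • T (y - μ) = (c * (ν + δ y)⁻¹) • T (y - μ)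
    rw [div_eq_mul_inv]
  have hHd : HasFDerivAt G
      ((c * (ν + δ z)⁻¹) • (T.comp (ContinuousLinearMap.id ℝ _)) +
        (c • ((-((ν + δ z) ^ 2)⁻¹) • ((2 : ℝ) • (innerSL ℝ (T (z - μ)))))).smulRight
          (T (z - μ))) z := by
    rw [hGfun]
    exact hGd
  have hfderiv := hHd.fderiv
  rw [hgradeq, hfderiv]
  -- norm bounds
  have hKnn : 0 ≤ (c / ν) * (1 / ε) + (2 * c / ν ^ 2) * (Rz ^ 2 / ε ^ 2) := by
    have h1 : 0 ≤ (c / ν) * (1 / ε) :=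
      mul_nonneg (div_nonneg hcpos.le hν.le) (div_nonneg zero_le_one hε.le)
    have h2 : 0 ≤ (2 * c / ν ^ 2) * (Rz ^ 2 / ε ^ 2) :=
      mul_nonneg (div_nonneg (by linarith) (sq_nonneg ν)) (div_nonneg (sq_nonneg Rz) (sq_nonneg ε))
    linarith
  refine ContinuousLinearMap.opNorm_le_bound _ hKnn ?_
  intro h
  set X : ℝ := (inner ℝ (T (z - μ)) h : ℝ) with hXdef
  have hTwle : ‖T (z - μ)‖ ≤ Rz / ε := by
    calc ‖T (z - μ)‖ ≤ 1 / ε * ‖z - μ‖ := hTnorm _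
      _ ≤ 1 / ε * Rz := by
          exact mul_le_mul_of_nonneg_left hz (le_of_lt (by positivity))
      _ = Rz / ε := by ring
  have hTh : ‖T h‖ ≤ 1 / ε * ‖h‖ := hTnorm h
  have hXb : |X| ≤ (Rz / ε) * ‖h‖ := by
    refine (abs_real_inner_le_norm (T (z - μ)) h).trans ?_
    exact mul_le_mul_of_nonneg_right hTwle (norm_nonneg h)
  have happ : ((c * (ν + δ z)⁻¹) • (T.comp (ContinuousLinearMap.id ℝ _)) +
        (c • ((-((ν + δ z) ^ 2)⁻¹) • ((2 : ℝ) • (innerSL ℝ (T (z - μ)))))).smulRight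
          (T (z - μ))) h
      = (c * (ν + δ z)⁻¹) • T h + (c * (-((ν + δ z) ^ 2)⁻¹ * (2 * X))) • T (z - μ) := by
    simp only [ContinuousLinearMap.add_apply, ContinuousLinearMap.smul_apply,
      ContinuousLinearMap.comp_apply, ContinuousLinearMap.id_apply,
      ContinuousLinearMap.smulRight_apply, innerSL_apply_apply, smul_eq_mul, ← hXdef]
  rw [happ]
  have e1 : ‖(c * (ν + δ z)⁻¹) • T h‖ = (c * (ν + δ z)⁻¹) * ‖T h‖ := by
    rw [norm_smul, Real.norm_eq_abs, abs_of_pos (mul_pos hcpos (inv_pos.2 hs))]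
  have e2 : ‖(c * (-((ν + δ z) ^ 2)⁻¹ * (2 * X))) • T (z - μ)‖
      = (c * ((ν + δ z) ^ 2)⁻¹ * (2 * |X|)) * ‖T (z - μ)‖ := by
    rw [norm_smul, Real.norm_eq_abs, abs_mul, abs_mul, abs_neg, abs_mul, abs_two,
      abs_of_pos hcpos, abs_of_pos (inv_pos.2 (pow_pos hs 2))]
    ring_nf
  have hinv1 : (ν + δ z)⁻¹ ≤ ν⁻¹ := by
    apply inv_anti₀ hν
    linarith [hδnn z]
  have hinv2 : ((ν + δ z) ^ 2)⁻¹ ≤ (ν ^ 2)⁻¹ := by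
    apply inv_anti₀ (pow_pos hν 2)
    have := hδnn z
    nlinarith
  have t1 : (c * (ν + δ z)⁻¹) * ‖T h‖ ≤ (c * ν⁻¹) * (1 / ε * ‖h‖) := by
    apply mul_le_mul _ hTh (norm_nonneg _) (mul_nonneg hcpos.le (inv_nonneg.2 hν.le))
    exact mul_le_mul_of_nonneg_left hinv1 hcpos.le
  have t2 : (c * ((ν + δ z) ^ 2)⁻¹ * (2 * |X|)) * ‖T (z - μ)‖
      ≤ (c * (ν ^ 2)⁻¹ * (2 * ((Rz / ε) * ‖h‖))) * (Rz / ε) := by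
    apply mul_le_mul _ hTwle (norm_nonneg _)
    · apply mul_nonneg (mul_nonneg hcpos.le (inv_nonneg.2 (sq_nonneg ν)))
      positivity
    · apply mul_le_mul _ (by linarith [hXb]) (by positivity)
        (mul_nonneg hcpos.le (inv_nonneg.2 (sq_nonneg ν)))
      exact mul_le_mul_of_nonneg_left hinv2 hcpos.le
  calc ‖(c * (ν + δ z)⁻¹) • T h + (c * (-((ν + δ z) ^ 2)⁻¹ * (2 * X))) • T (z - μ)‖
      ≤ (c * (ν + δ z)⁻¹) * ‖T h‖ + (c * ((ν + δ z) ^ 2)⁻¹ * (2 * |X|)) * ‖T (z - μ)‖ := by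
        rw [← e1, ← e2]; exact norm_add_le _ _
    _ ≤ (c * ν⁻¹) * (1 / ε * ‖h‖) + (c * (ν ^ 2)⁻¹ * (2 * ((Rz / ε) * ‖h‖))) * (Rz / ε) :=
        add_le_add t1 t2
    _ = ((c / ν) * (1 / ε) + (2 * c / ν ^ 2) * (Rz ^ 2 / ε ^ 2)) * ‖h‖ := by
        field_simp
end

section
/- Let d ≥ 1 be an integer, ν > 0, μ ∈ ℝ^d, ε > 0, and let Σ be a symmetric d×d real matrix with Σ ⪰ ε I_d. Define δ(z) = (z − μ)ᵀ Σ⁻¹ (z − μ) and ℓ(z) = ((ν + d)/2) · log(1 + δ(z)/ν). Let R_z ≥ 0 and set M = ((ν + d)/ν)(1/ε) + (2(ν + d)/ν²)(R_z²/ε²). Then the gradient ∇ℓ is M-Lipschitz on the closed ball {z ∈ ℝ^d : ‖z − μ‖ ≤ R_z}: for all z, z' in this ball, ‖∇ℓ(z) − ∇ℓ(z')‖ ≤ M ‖z − z'‖. -/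
open Matrix
open scoped RealInnerProductSpace

set_option maxHeartbeats 1000000

/-- **Lipschitz gradient of the Student-t negative log-likelihood on a ball.**
If `Σ` is symmetric with `Σ − ε I_d` positive semidefinite for some `ε > 0`, then with
`δ(z) = (z - μ)ᵀ Σ⁻¹ (z - μ)`, `ℓ(z) = ((ν + d)/2) log(1 + δ(z)/ν)`, `R_z ≥ 0` and
`M = ((ν + d)/ν)(1/ε) + (2(ν + d)/ν²)(R_z²/ε²)`, the gradient `∇ℓ` is `M`-Lipschitz on
the closed ball `{z : ‖z − μ‖ ≤ R_z}`. -/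
theorem studentT_nll_gradient_lipschitz_on_ball
    (d : ℕ) (hd : 1 ≤ d) (ν : ℝ) (hν : 0 < ν)
    (μ : EuclideanSpace ℝ (Fin d)) (ε : ℝ) (hε : 0 < ε)
    (Sig : Matrix (Fin d) (Fin d) ℝ) (hSigSym : Sig.IsSymm)
    (hSig : (Sig - ε • (1 : Matrix (Fin d) (Fin d) ℝ)).PosSemidef)
    (δ : EuclideanSpace ℝ (Fin d) → ℝ)
    (hδ : δ = fun (z : EuclideanSpace ℝ (Fin d)) => (z - μ) ⬝ᵥ (Sig⁻¹ *ᵥ (z - μ)))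
    (ℓ : EuclideanSpace ℝ (Fin d) → ℝ)
    (hℓ : ℓ = fun (z : EuclideanSpace ℝ (Fin d)) =>
      ((ν + (d : ℝ)) / 2) * Real.log (1 + δ z / ν))
    (Rz : ℝ) (hRz : 0 ≤ Rz)
    (M : ℝ)
    (hM : M = ((ν + (d : ℝ)) / ν) * (1 / ε) +
      (2 * (ν + (d : ℝ)) / ν ^ 2) * (Rz ^ 2 / ε ^ 2)) :
    ∀ z z' : EuclideanSpace ℝ (Fin d), ‖z - μ‖ ≤ Rz → ‖z' - μ‖ ≤ Rz →
      ‖gradient ℓ z - gradient ℓ z'‖ ≤ M * ‖z - z'‖ := by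
  set c : ℝ := ν + (d : ℝ) with hc
  have hcpos : 0 < c := by positivity
  set A : Matrix (Fin d) (Fin d) ℝ := Sig⁻¹ with hA
  have hinner : ∀ a b : EuclideanSpace ℝ (Fin d), ⟪a, b⟫ = a ⬝ᵥ b := by
    intro a b
    simp [PiLp.inner_apply, dotProduct, RCLike.inner_apply, conj_trivial]
    exact Finset.sum_congr rfl (fun _ _ => mul_comm _ _)
  have hεpd : (ε • (1 : Matrix (Fin d) (Fin d) ℝ)).PosDef := by
    refine Matrix.PosDef.of_dotProduct_mulVec_pos (by simp [Matrix.IsHermitian]) ?_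
    intro x hx
    have hxx : 0 < x ⬝ᵥ x := by
      rcases Function.ne_iff.1 hx with ⟨i, hi⟩
      have : 0 < ∑ j, x j * x j :=
        Finset.sum_pos' (fun j _ => mul_self_nonneg _)
          ⟨i, Finset.mem_univ i, mul_self_pos.2 hi⟩
      simpa [dotProduct] using this
    simpa [smul_mulVec, dotProduct_smul, star_trivial] using mul_pos hε hxx
  have hSigPD : Sig.PosDef := by
    have := Matrix.PosDef.posSemidef_add hSig hεpd
    simpa using this
  have hAPD : A.PosDef := hSigPD.inv
  have hATr : Aᵀ = A := by
    have := hAPD.isHermitian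
    rwa [Matrix.IsHermitian, conjTranspose_eq_transpose_of_trivial] at this
  set T : EuclideanSpace ℝ (Fin d) →L[ℝ] EuclideanSpace ℝ (Fin d) :=
    LinearMap.toContinuousLinearMap (Matrix.toEuclideanLin A) with hT
  have hinnerT : ∀ a b : EuclideanSpace ℝ (Fin d), ⟪a, T b⟫ = a ⬝ᵥ (A *ᵥ b) := by
    intro a b; rw [hinner]; rfl
  have hsym : ∀ a b : EuclideanSpace ℝ (Fin d), ⟪T a, b⟫ = ⟪a, T b⟫ := by
    intro a b
    have h1 : ⟪T a, b⟫ = (A *ᵥ a) ⬝ᵥ b := by rw [hinner]; rfl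
    rw [h1, hinnerT, Matrix.dotProduct_mulVec a A b, ← Matrix.mulVec_transpose, hATr]
  have hTbound : ∀ x : EuclideanSpace ℝ (Fin d), ‖T x‖ ≤ ε⁻¹ * ‖x‖ := by
    intro x
    set y : EuclideanSpace ℝ (Fin d) := T x with hy
    have hSy : Sig *ᵥ (A *ᵥ x) = x := by
      rw [Matrix.mulVec_mulVec,
        Matrix.mul_nonsing_inv _ (Matrix.isUnit_iff_isUnit_det _ |>.1 hSigPD.isUnit),
        Matrix.one_mulVec]
    have h1 : ε * (y ⬝ᵥ y) ≤ y ⬝ᵥ (Sig *ᵥ y) := by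
      have h0 : (0:ℝ) ≤ y ⬝ᵥ ((Sig - ε • 1) *ᵥ y) := by simpa using hSig.dotProduct_mulVec_nonneg y.ofLp
      rw [Matrix.sub_mulVec, dotProduct_sub, smul_mulVec, Matrix.one_mulVec,
        dotProduct_smul] at h0
      have : ε • (y ⬝ᵥ y) = ε * (y ⬝ᵥ y) := rfl
      linarith [h0, this ▸ h0]
    have hyx : y ⬝ᵥ (Sig *ᵥ y) = ⟪y, x⟫ := by
      have h2 : (Sig *ᵥ (y : Fin d → ℝ)) = x := hSy
      rw [hinner, h2]
    have hnorm2 : y ⬝ᵥ y = ‖y‖ ^ 2 := by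
      rw [← hinner, real_inner_self_eq_norm_sq]
    have hcs : ⟪y, x⟫ ≤ ‖y‖ * ‖x‖ := real_inner_le_norm y x
    have key : ε * (‖y‖ * ‖y‖) ≤ ‖y‖ * ‖x‖ := by
      have := h1.trans (hyx ▸ hcs)
      rw [hnorm2, pow_two] at this
      linarith
    rcases eq_or_lt_of_le (norm_nonneg y) with h0 | h0
    · rw [← h0]; positivity
    · have h3 : ε * ‖y‖ ≤ ‖x‖ := by
        have := (mul_le_mul_iff_of_pos_right h0).1 (by linarith : ε * ‖y‖ * ‖y‖ ≤ ‖x‖ * ‖y‖)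
        exact this
      calc ‖y‖ = ε⁻¹ * (ε * ‖y‖) := by field_simp
        _ ≤ ε⁻¹ * ‖x‖ := by
            exact mul_le_mul_of_nonneg_left h3 (by positivity)
  have hδinner : ∀ z, δ z = ⟪z - μ, T (z - μ)⟫ := by
    intro z; rw [hinnerT, hδ]; rfl
  have hδnonneg : ∀ z, 0 ≤ δ z := by
    intro z
    rw [hδ]
    simpa using hAPD.posSemidef.dotProduct_mulVec_nonneg (z - μ).ofLp
  have hspos : ∀ z, 0 < 1 + δ z / ν := by
    intro z
    have := hδnonneg z
    positivity
  have hgrad : ∀ z, HasGradientAt ℓ ((c / (ν * (1 + δ z / ν))) • T (z - μ)) z := by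
    intro z
    have h1 : HasFDerivAt (fun w : EuclideanSpace ℝ (Fin d) => w - μ)
        (ContinuousLinearMap.id ℝ (EuclideanSpace ℝ (Fin d))) z := (hasFDerivAt_id z).sub_const μ
    have h2 : HasFDerivAt (fun w : EuclideanSpace ℝ (Fin d) => T (w - μ)) T z := by
      exact T.hasFDerivAt.comp z h1
    have h3 := (h1.inner (𝕜 := ℝ) h2)
    have hδfun : δ = fun w : EuclideanSpace ℝ (Fin d) => ⟪w - μ, T (w - μ)⟫ := by
      funext w; exact hδinner w
    have h4 : HasFDerivAt δ
        ((fderivInnerCLM ℝ (z - μ, T (z - μ))).comp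
          ((ContinuousLinearMap.id ℝ (EuclideanSpace ℝ (Fin d))).prod T)) z := by
      rw [hδfun]; exact h3
    have h5 : HasFDerivAt (fun w => 1 + δ w / ν)
        ((ν⁻¹ : ℝ) • ((fderivInnerCLM ℝ (z - μ, T (z - μ))).comp
          ((ContinuousLinearMap.id ℝ (EuclideanSpace ℝ (Fin d))).prod T))) z := by
      have h5' := (h4.const_mul ν⁻¹).const_add 1
      simpa [div_eq_inv_mul] using h5'
    have h6 : HasFDerivAt (fun w => Real.log (1 + δ w / ν))
        (((1 + δ z / ν)⁻¹ : ℝ) • ((ν⁻¹ : ℝ) • ((fderivInnerCLM ℝ (z - μ, T (z - μ))).comp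
          ((ContinuousLinearMap.id ℝ (EuclideanSpace ℝ (Fin d))).prod T)))) z :=
      h5.log (ne_of_gt (hspos z))
    have h7 : HasFDerivAt ℓ
        ((c / 2) • (((1 + δ z / ν)⁻¹ : ℝ) • ((ν⁻¹ : ℝ) •
          ((fderivInnerCLM ℝ (z - μ, T (z - μ))).comp
          ((ContinuousLinearMap.id ℝ (EuclideanSpace ℝ (Fin d))).prod T))))) z := by
      rw [hℓ]
      exact h6.const_mul (c / 2)
    rw [hasGradientAt_iff_hasFDerivAt]
    refine h7.congr_fderiv ?_
    symm
    apply ContinuousLinearMap.ext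
    intro w
    have lhs_eq : (InnerProductSpace.toDual ℝ (EuclideanSpace ℝ (Fin d)))
        ((c / (ν * (1 + δ z / ν))) • T (z - μ)) w
        = (c / (ν * (1 + δ z / ν))) * ⟪T (z - μ), w⟫ := by
      rw [InnerProductSpace.toDual_apply_apply, real_inner_smul_left]
    have rhs_eq : ((c / 2) • (((1 + δ z / ν)⁻¹ : ℝ) • ((ν⁻¹ : ℝ) •
          ((fderivInnerCLM ℝ (z - μ, T (z - μ))).comp
          ((ContinuousLinearMap.id ℝ (EuclideanSpace ℝ (Fin d))).prod T))))) w
        = (c / 2) * ((1 + δ z / ν)⁻¹ * (ν⁻¹ * (⟪z - μ, T w⟫ + ⟪w, T (z - μ)⟫))) := by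
      simp [fderivInnerCLM_apply]
    rw [lhs_eq, rhs_eq]
    have e1 : ⟪z - μ, T w⟫ = ⟪T (z - μ), w⟫ := (hsym _ _).symm
    rw [e1, real_inner_comm w]
    have hs := (hspos z).ne'
    have hν' := hν.ne'
    have scalar : ∀ x : ℝ, c / (ν * (1 + δ z / ν)) * x
        = c / 2 * ((1 + δ z / ν)⁻¹ * (ν⁻¹ * (x + x))) := by
      intro x
      have hsd : ν + δ z ≠ 0 := by have := hδnonneg z; positivity
      field_simp
      ring
    exact scalar _
  intro z z' hz hz'
  set u : EuclideanSpace ℝ (Fin d) := z - μ with hu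
  set u' : EuclideanSpace ℝ (Fin d) := z' - μ with hu'
  set s : ℝ := 1 + δ z / ν with hsdef
  set s' : ℝ := 1 + δ z' / ν with hs'def
  have hs1 : 1 ≤ s := by
    have := div_nonneg (hδnonneg z) hν.le; rw [hsdef]; linarith
  have hs'1 : 1 ≤ s' := by
    have := div_nonneg (hδnonneg z') hν.le; rw [hs'def]; linarith
  have hspos0 : 0 < s := lt_of_lt_of_le one_pos hs1
  have hs'pos0 : 0 < s' := lt_of_lt_of_le one_pos hs'1
  set k : ℝ := c / (ν * s) with hk
  set k' : ℝ := c / (ν * s') with hk'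
  have hgz : gradient ℓ z = k • T u := (hgrad z).gradient
  have hgz' : gradient ℓ z' = k' • T u' := (hgrad z').gradient
  have huu : u - u' = z - z' := sub_sub_sub_cancel_right z z' μ
  set D : ℝ := ‖z - z'‖ with hD
  have hDnn : 0 ≤ D := norm_nonneg _
  have hTuu : ‖T (u - u')‖ ≤ ε⁻¹ * D := by
    calc ‖T (u - u')‖ ≤ ε⁻¹ * ‖u - u'‖ := hTbound _
      _ = ε⁻¹ * D := by rw [huu]
  -- difference of δ's
  have hsym2 : ∀ a b : EuclideanSpace ℝ (Fin d), ⟪a, T b⟫ = ⟪b, T a⟫ := by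
    intro a b
    rw [← hsym a b]
    exact real_inner_comm _ _
  have hdiff : δ z - δ z' = ⟪u - u', T (u + u')⟫ := by
    rw [hδinner z, hδinner z']
    simp only [hu, hu', map_add, map_sub, inner_add_right, inner_sub_right,
      inner_add_left, inner_sub_left]
    linear_combination hsym2 z μ + hsym2 μ z' + hsym2 z' z
  have habs : |δ z - δ z'| ≤ 2 * Rz * ε⁻¹ * D := by
    rw [hdiff]
    calc |⟪u - u', T (u + u')⟫| ≤ ‖u - u'‖ * ‖T (u + u')‖ := abs_real_inner_le_norm _ _
      _ ≤ D * (ε⁻¹ * (2 * Rz)) := by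
          apply mul_le_mul
          · rw [huu]
          · calc ‖T (u + u')‖ ≤ ε⁻¹ * ‖u + u'‖ := hTbound _
              _ ≤ ε⁻¹ * (2 * Rz) := by
                  apply mul_le_mul_of_nonneg_left _ (by positivity)
                  calc ‖u + u'‖ ≤ ‖u‖ + ‖u'‖ := norm_add_le _ _
                    _ ≤ 2 * Rz := by linarith [hz, hz']
          · exact norm_nonneg _
          · exact hDnn
      _ = 2 * Rz * ε⁻¹ * D := by ring
  have hk2 : k = c / (ν + δ z) := by
    rw [hk, hsdef, mul_add, mul_one, mul_div_cancel₀ _ hν.ne']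
  have hk'2 : k' = c / (ν + δ z') := by
    rw [hk', hs'def, mul_add, mul_one, mul_div_cancel₀ _ hν.ne']
  have hPpos : 0 < ν + δ z := by have := hδnonneg z; linarith
  have hP'pos : 0 < ν + δ z' := by have := hδnonneg z'; linarith
  have hkk : k - k' = c * (δ z' - δ z) / ((ν + δ z) * (ν + δ z')) := by
    rw [hk2, hk'2]
    field_simp
    ring
  have habsk : |k - k'| ≤ c / ν ^ 2 * |δ z - δ z'| := by
    have h1 : |k - k'| = c * |δ z - δ z'| / ((ν + δ z) * (ν + δ z')) := by
      rw [hkk, abs_div, abs_mul, abs_of_pos hcpos, abs_sub_comm (δ z') (δ z),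
        abs_of_pos (by positivity : (0:ℝ) < (ν + δ z) * (ν + δ z'))]
    rw [h1]
    have h2 : ν ^ 2 ≤ (ν + δ z) * (ν + δ z') := by nlinarith [hδnonneg z, hδnonneg z']
    calc c * |δ z - δ z'| / ((ν + δ z) * (ν + δ z')) ≤ c * |δ z - δ z'| / ν ^ 2 :=
          div_le_div_of_nonneg_left (by positivity) (by positivity) h2
      _ = c / ν ^ 2 * |δ z - δ z'| := by ring
  have hkpos : 0 < k := by rw [hk]; positivity
  have hkle : k ≤ c / ν := by
    rw [hk2]
    exact div_le_div_of_nonneg_left hcpos.le hν (by linarith [hδnonneg z])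
  have b1 : ‖k • T (u - u')‖ ≤ c / ν * (ε⁻¹ * D) := by
    rw [norm_smul, Real.norm_eq_abs, abs_of_pos hkpos]
    exact mul_le_mul hkle hTuu (norm_nonneg _) (by positivity)
  have hTu' : ‖T u'‖ ≤ ε⁻¹ * Rz := by
    calc ‖T u'‖ ≤ ε⁻¹ * ‖u'‖ := hTbound _
      _ ≤ ε⁻¹ * Rz := by
          exact mul_le_mul_of_nonneg_left hz' (by positivity)
  have b2 : ‖(k - k') • T u'‖ ≤ (c / ν ^ 2 * (2 * Rz * ε⁻¹ * D)) * (ε⁻¹ * Rz) := by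
    rw [norm_smul, Real.norm_eq_abs]
    apply mul_le_mul _ hTu' (norm_nonneg _) (by positivity)
    calc |k - k'| ≤ c / ν ^ 2 * |δ z - δ z'| := habsk
      _ ≤ c / ν ^ 2 * (2 * Rz * ε⁻¹ * D) := by
          apply mul_le_mul_of_nonneg_left habs (by positivity)
  clear_value u u' s s' k k'
  have hsplit : k • T u - k' • T u' = k • T (u - u') + (k - k') • T u' := by
    rw [map_sub]
    module
  calc ‖gradient ℓ z - gradient ℓ z'‖
      = ‖k • T (u - u') + (k - k') • T u'‖ := by rw [hgz, hgz', hsplit]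
    _ ≤ ‖k • T (u - u')‖ + ‖(k - k') • T u'‖ := norm_add_le _ _
    _ ≤ c / ν * (ε⁻¹ * D) + (c / ν ^ 2 * (2 * Rz * ε⁻¹ * D)) * (ε⁻¹ * Rz) := by
        exact add_le_add b1 b2
    _ = M * D := by rw [hM, hc]; field_simp
end
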